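/- For the Dyck path recursion with general M: define f_k for k ∈ ℤ^M by f_0 = -4, f_k = 0 if some k_j < 0, and for k ≠ 0: γ_{k-e₁} f_{k-e₁} + Σ_{i=1}^{M-1} 2(i+1)(kᵢ+1) f_{k - e_{i+1} + e_i} + Σ_{0≤l≤k} f_l f_{k-l} = 0, where γ_k = -1/2 + Σᵢ(1+i/2)kᵢ. Then this recursion has a unique solution (f_k)_{k∈ℕ^M}, and f_k > 0 for all k ≠ 0 with all coordinates nonnegative. -/

import Mathlib

/-- The exponent `γ_k = -1/2 + ∑ᵢ (1 + i/2) kᵢ` (with `1`-based index `i`). -/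
noncomputable def gammaExp {M : ℕ} (k : Fin M → ℤ) : ℝ :=
  -(1 / 2) + ∑ i : Fin M, (1 + ((i : ℕ) + 1 : ℝ) / 2) * (k i : ℝ)

/-- The `i`-th unit vector in `ℤ^M`. -/
def unitVec {M : ℕ} (i : Fin M) : Fin M → ℤ := fun j => if j = i then 1 else 0

/-- The Dyck path amplitude recursion with general `M`:
`f_0 = -4`, `f_k = 0` if some coordinate of `k` is negative, and for `k ≠ 0` nonnegative,
`γ_{k-e₁} f_{k-e₁} + ∑_{i=1}^{M-1} 2(i+1)(kᵢ+1) f_{k-e_{i+1}+e_i} + ∑_{0≤l≤k} f_l f_{k-l} = 0`. -/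
def DyckRecursion {M : ℕ} (hM : 0 < M) (f : (Fin M → ℤ) → ℝ) : Prop :=
  f 0 = -4 ∧
  (∀ k : Fin M → ℤ, (∃ j, k j < 0) → f k = 0) ∧
  (∀ k : Fin M → ℤ, (∀ j, 0 ≤ k j) → k ≠ 0 →
    gammaExp (k - unitVec ⟨0, hM⟩) * f (k - unitVec ⟨0, hM⟩) +
    (∑ i : Fin M, if hi : (i : ℕ) + 1 < M then
        2 * ((i : ℕ) + 2 : ℝ) * ((k i : ℝ) + 1) * f (k - unitVec ⟨(i : ℕ) + 1, hi⟩ + unitVec i)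
      else 0) +
    (∑ l ∈ Fintype.piFinset (fun i => Finset.range ((k i).toNat + 1)),
      f (fun i => (l i : ℤ)) * f (fun i => k i - (l i : ℤ))) = 0)

namespace DyckAux

open scoped Classical

variable {M : ℕ}

/-- The weight `ν k = ∑ (i+1) kᵢ`, the termination measure. -/
def nu (k : Fin M → ℤ) : ℤ := ∑ i : Fin M, ((i : ℕ) + 1 : ℤ) * k i

lemma nu_sub (x y : Fin M → ℤ) : nu (x - y) = nu x - nu y := by
  simp [nu, mul_sub, Finset.sum_sub_distrib]

lemma nu_add (x y : Fin M → ℤ) : nu (x + y) = nu x + nu y := by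
  simp [nu, mul_add, Finset.sum_add_distrib]

lemma nu_unit (i : Fin M) : nu (unitVec i) = (i : ℕ) + 1 := by
  simp [nu, unitVec, mul_ite, Finset.sum_ite_eq']

lemma nu_nonneg {k : Fin M → ℤ} (hk : ∀ j, 0 ≤ k j) : 0 ≤ nu k :=
  Finset.sum_nonneg fun i _ => mul_nonneg (by positivity) (hk i)

lemma nu_pos {k : Fin M → ℤ} (hk : ∀ j, 0 ≤ k j) (h0 : k ≠ 0) : 1 ≤ nu k := by
  obtain ⟨j, hj⟩ : ∃ j, k j ≠ 0 := by
    by_contra h; push_neg at h; exact h0 (funext h)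
  have hj1 : 1 ≤ k j := lt_of_le_of_ne (hk j) (Ne.symm hj)
  have hjc : (0 : ℤ) ≤ (j : ℕ) := Int.ofNat_nonneg _
  calc (1 : ℤ) ≤ ((j : ℕ) + 1) * k j := by nlinarith
  _ ≤ nu k :=
    Finset.single_le_sum (fun i _ => mul_nonneg (by positivity) (hk i)) (Finset.mem_univ j)

lemma nu_lt {l k : Fin M → ℤ} (hle : ∀ i, l i ≤ k i) (hne : l ≠ k) : nu l < nu k := by
  obtain ⟨j, hj⟩ : ∃ j, l j ≠ k j := by
    by_contra h; push_neg at h; exact hne (funext h)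
  refine Finset.sum_lt_sum (fun i _ => ?_) ⟨j, Finset.mem_univ j, ?_⟩
  · exact mul_le_mul_of_nonneg_left (hle i) (by positivity)
  · exact mul_lt_mul_of_pos_left (lt_of_le_of_ne (hle j) hj) (by positivity)

end DyckAux

namespace DyckAux2
open DyckAux
open scoped Classical
variable {M : ℕ}

/-- The index set of the convolution sum. -/
def SFin (k : Fin M → ℤ) : Finset (Fin M → ℕ) :=
  Fintype.piFinset (fun i => Finset.range ((k i).toNat + 1))

/-- `k` as a vector of naturals. -/
def kNat (k : Fin M → ℤ) : Fin M → ℕ := fun i => (k i).toNat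

lemma mem_SFin {k : Fin M → ℤ} {l : Fin M → ℕ} :
    l ∈ SFin k ↔ ∀ i, l i ≤ (k i).toNat := by
  simp [SFin, Fintype.mem_piFinset, Nat.lt_succ_iff]

lemma zero_mem_SFin (k : Fin M → ℤ) : (0 : Fin M → ℕ) ∈ SFin k :=
  mem_SFin.2 fun i => Nat.zero_le _

lemma kNat_mem_SFin (k : Fin M → ℤ) : kNat k ∈ SFin k := mem_SFin.2 fun i => le_rfl

lemma kNat_ne_zero {k : Fin M → ℤ} (hk : ∀ j, 0 ≤ k j) (h0 : k ≠ 0) : kNat k ≠ 0 := by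
  intro h
  apply h0
  funext i
  have : (k i).toNat = 0 := congrFun h i
  have := hk i
  simp only [Pi.zero_apply]
  omega

lemma toZ_kNat {k : Fin M → ℤ} (hk : ∀ j, 0 ≤ k j) :
    (fun i => ((kNat k i : ℤ))) = k := by
  funext i; simp [kNat, Int.toNat_of_nonneg (hk i)]

/-- The "B" sum: the shift terms. -/
noncomputable def Bsum (hM : 0 < M) (f : (Fin M → ℤ) → ℝ) (k : Fin M → ℤ) : ℝ :=
  ∑ i : Fin M, if hi : (i : ℕ) + 1 < M then
      2 * ((i : ℕ) + 2 : ℝ) * ((k i : ℝ) + 1) * f (k - unitVec ⟨(i : ℕ) + 1, hi⟩ + unitVec i)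
    else 0

/-- The "C" sum: the interior convolution terms. -/
noncomputable def Csum (f : (Fin M → ℤ) → ℝ) (k : Fin M → ℤ) : ℝ :=
  ∑ l ∈ ((SFin k).erase 0).erase (kNat k),
    f (fun i => (l i : ℤ)) * f (fun i => k i - (l i : ℤ))

/-- The auxiliary sequence of approximations to the solution. -/
noncomputable def fAux (hM : 0 < M) : ℕ → (Fin M → ℤ) → ℝ :=
  Nat.rec (motive := fun _ => (Fin M → ℤ) → ℝ)
    (fun k => if ∃ j, k j < 0 then 0 else if k = 0 then -4 else 0)
    (fun _ prev k => if ∃ j, k j < 0 then 0 else if k = 0 then -4 else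
      (gammaExp (k - unitVec ⟨0, hM⟩) * prev (k - unitVec ⟨0, hM⟩) +
        Bsum hM prev k + Csum prev k) / 8)

lemma fAux_neg (hM : 0 < M) (n : ℕ) {k : Fin M → ℤ} (h : ∃ j, k j < 0) :
    fAux hM n k = 0 := by
  cases n <;> simp [fAux, h]

lemma fAux_zero (hM : 0 < M) (n : ℕ) : fAux hM n (0 : Fin M → ℤ) = -4 := by
  cases n <;> simp [fAux]

lemma fAux_succ (hM : 0 < M) (n : ℕ) {k : Fin M → ℤ} (hk : ∀ j, 0 ≤ k j) (h0 : k ≠ 0) :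
    fAux hM (n + 1) k =
      (gammaExp (k - unitVec ⟨0, hM⟩) * fAux hM n (k - unitVec ⟨0, hM⟩) +
        Bsum hM (fAux hM n) k + Csum (fAux hM n) k) / 8 := by
  have h1 : ¬ ∃ j, k j < 0 := by push_neg; exact hk
  show (if ∃ j, k j < 0 then (0:ℝ) else if k = 0 then -4 else _) = _
  rw [if_neg h1, if_neg h0]
  rfl

end DyckAux2

namespace DyckAux3
open DyckAux DyckAux2
open scoped Classical
variable {M : ℕ}

lemma gammaExp_zero : gammaExp (0 : Fin M → ℤ) = -(1/2) := by simp [gammaExp]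

lemma gammaExp_ge_one {m : Fin M → ℤ} (hm : ∀ j, 0 ≤ m j) (h0 : m ≠ 0) :
    1 ≤ gammaExp m := by
  obtain ⟨j, hj⟩ : ∃ j, m j ≠ 0 := by
    by_contra h; push_neg at h; exact h0 (funext h)
  have hj1 : (1 : ℤ) ≤ m j := lt_of_le_of_ne (hm j) (Ne.symm hj)
  have hj1' : (1 : ℝ) ≤ (m j : ℝ) := by exact_mod_cast hj1
  have hterm : (3/2 : ℝ) ≤ (1 + ((j : ℕ) + 1 : ℝ) / 2) * (m j : ℝ) := by
    have hc : (0 : ℝ) ≤ (j : ℕ) := Nat.cast_nonneg _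
    nlinarith
  have hsum : (3/2 : ℝ) ≤ ∑ i : Fin M, (1 + ((i : ℕ) + 1 : ℝ) / 2) * (m i : ℝ) := by
    have hs := Finset.single_le_sum (f := fun i : Fin M => (1 + ((i : ℕ) + 1 : ℝ) / 2) * (m i : ℝ))
      (fun i _ => by
        have hc : (0 : ℝ) ≤ (i : ℕ) := Nat.cast_nonneg _
        have : (0:ℝ) ≤ (m i : ℝ) := by exact_mod_cast hm i
        nlinarith) (Finset.mem_univ j)
    linarith
  unfold gammaExp
  linarith

/-- fact about `k - e₁`. -/
lemma nu_sub_e0 (hM : 0 < M) (k : Fin M → ℤ) :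
    nu (k - unitVec ⟨0, hM⟩) = nu k - 1 := by
  rw [nu_sub, nu_unit]
  norm_num

/-- Facts about the shift index `k - e_{i+1} + e_i`. -/
lemma shift_nu (k : Fin M → ℤ) (i : Fin M) (hi : (i : ℕ) + 1 < M) :
    nu (k - unitVec ⟨(i : ℕ) + 1, hi⟩ + unitVec i) = nu k - 1 := by
  rw [nu_add, nu_sub, nu_unit, nu_unit]
  push_cast
  ring

lemma shift_ne_zero {k : Fin M → ℤ} (hk : ∀ j, 0 ≤ k j) (i : Fin M) (hi : (i : ℕ) + 1 < M) :
    k - unitVec ⟨(i : ℕ) + 1, hi⟩ + unitVec i ≠ 0 := by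
  intro h
  have hne : i ≠ (⟨(i : ℕ) + 1, hi⟩ : Fin M) := by
    refine Fin.ne_of_val_ne ?_
    simp
  have h1 := congrFun h i
  simp only [Pi.add_apply, Pi.sub_apply, Pi.zero_apply, unitVec, if_neg hne, if_pos rfl, if_true] at h1
  have h2 := hk i
  omega

/-- Facts about interior convolution indices. -/
lemma interior_facts {k : Fin M → ℤ} (hk : ∀ j, 0 ≤ k j) {l : Fin M → ℕ}
    (hl : l ∈ ((SFin k).erase 0).erase (kNat k)) :
    (∀ j, 0 ≤ (l j : ℤ)) ∧ (fun i => (l i : ℤ)) ≠ 0 ∧ nu (fun i => (l i : ℤ)) < nu k ∧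
    (∀ j, 0 ≤ k j - (l j : ℤ)) ∧ (fun i => k i - (l i : ℤ)) ≠ 0 ∧
    nu (fun i => k i - (l i : ℤ)) < nu k := by
  rw [Finset.mem_erase, Finset.mem_erase] at hl
  obtain ⟨hlk, hl0, hlS⟩ := hl
  have hle : ∀ i, (l i : ℤ) ≤ k i := by
    intro i
    have := mem_SFin.1 hlS i
    have h2 := hk i
    omega
  have hln0 : (fun i => (l i : ℤ)) ≠ 0 := by
    intro h
    apply hl0
    funext i
    have := congrFun h i
    simp only [Pi.zero_apply] at this ⊢
    exact_mod_cast this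
  have hlnk : (fun i => (l i : ℤ)) ≠ k := by
    intro h
    apply hlk
    funext i
    have := congrFun h i
    simp [kNat, ← this]
  refine ⟨fun j => Int.ofNat_nonneg _, hln0, nu_lt hle hlnk, ?_, ?_, ?_⟩
  · intro j; have := hle j; omega
  · intro h
    apply hlnk
    funext i
    have h3 := congrFun h i
    simp only [Pi.zero_apply] at h3
    omega
  · refine nu_lt (fun i => ?_) ?_
    · have : (0:ℤ) ≤ (l i : ℤ) := Int.ofNat_nonneg _
      omega
    · intro h
      apply hln0
      funext i
      have := congrFun h i
      simp only [Pi.zero_apply] at this ⊢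
      omega

/-- The key congruence lemma: the right-hand side only depends on values at
smaller weight. -/
lemma parts_congr (hM : 0 < M) {f g : (Fin M → ℤ) → ℝ} {k : Fin M → ℤ}
    (hk : ∀ j, 0 ≤ k j)
    (hfg : ∀ m, (∀ j, 0 ≤ m j) → nu m < nu k → f m = g m)
    (hf0 : ∀ m : Fin M → ℤ, (∃ j, m j < 0) → f m = 0)
    (hg0 : ∀ m : Fin M → ℤ, (∃ j, m j < 0) → g m = 0) :
    gammaExp (k - unitVec ⟨0, hM⟩) * f (k - unitVec ⟨0, hM⟩) + Bsum hM f k + Csum f k =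
    gammaExp (k - unitVec ⟨0, hM⟩) * g (k - unitVec ⟨0, hM⟩) + Bsum hM g k + Csum g k := by
  have key : ∀ m : Fin M → ℤ, nu m < nu k → f m = g m := by
    intro m hm
    by_cases h : ∀ j, 0 ≤ m j
    · exact hfg m h hm
    · push_neg at h
      obtain ⟨j, hj⟩ := h
      rw [hf0 m ⟨j, hj⟩, hg0 m ⟨j, hj⟩]
  have hA : f (k - unitVec ⟨0, hM⟩) = g (k - unitVec ⟨0, hM⟩) := by
    apply key; rw [nu_sub_e0]; omega
  have hB : Bsum hM f k = Bsum hM g k := by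
    unfold Bsum
    refine Finset.sum_congr rfl fun i _ => ?_
    split
    · rename_i hi
      rw [key _ (by rw [shift_nu]; omega)]
    · rfl
  have hC : Csum f k = Csum g k := by
    unfold Csum
    refine Finset.sum_congr rfl fun l hl => ?_
    obtain ⟨h1, h2, h3, h4, h5, h6⟩ := interior_facts hk hl
    rw [key _ h3, key _ h6]
  rw [hA, hB, hC]

/-- Splitting off the two boundary terms of the convolution sum. -/
lemma convSplit {f : (Fin M → ℤ) → ℝ} (hf0 : f 0 = -4) {k : Fin M → ℤ}
    (hk : ∀ j, 0 ≤ k j) (h0 : k ≠ 0) :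
    (∑ l ∈ Fintype.piFinset (fun i => Finset.range ((k i).toNat + 1)),
      f (fun i => (l i : ℤ)) * f (fun i => k i - (l i : ℤ))) = -8 * f k + Csum f k := by
  have hS : Fintype.piFinset (fun i => Finset.range ((k i).toNat + 1)) = SFin k := rfl
  rw [hS]
  set g : (Fin M → ℕ) → ℝ := fun l => f (fun i => (l i : ℤ)) * f (fun i => k i - (l i : ℤ))
    with hg
  have h1 : (SFin k).sum g = g 0 + ((SFin k).erase 0).sum g :=
    (Finset.add_sum_erase _ g (zero_mem_SFin k)).symm
  have hkmem : kNat k ∈ (SFin k).erase 0 :=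
    Finset.mem_erase.2 ⟨kNat_ne_zero hk h0, kNat_mem_SFin k⟩
  have h2 : ((SFin k).erase 0).sum g = g (kNat k) + (((SFin k).erase 0).erase (kNat k)).sum g :=
    (Finset.add_sum_erase _ g hkmem).symm
  have hg0' : g 0 = -4 * f k := by
    have e1 : (fun i => (((0 : Fin M → ℕ)) i : ℤ)) = (0 : Fin M → ℤ) := by
      funext i; simp
    have e2 : (fun i => k i - (((0 : Fin M → ℕ)) i : ℤ)) = k := by
      funext i; simp
    rw [hg]; simp only [e1, e2, hf0]
  have hgk : g (kNat k) = f k * (-4) := by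
    have e1 : (fun i => ((kNat k) i : ℤ)) = k := toZ_kNat hk
    have e2 : (fun i => k i - ((kNat k) i : ℤ)) = (0 : Fin M → ℤ) := by
      funext i
      have := congrFun e1 i
      simp [this]
    rw [hg]; simp only [e1, e2, hf0]
  rw [h1, h2, hg0', hgk]
  have hCs : (((SFin k).erase 0).erase (kNat k)).sum g = Csum f k := rfl
  rw [hCs]
  ring

end DyckAux3

namespace DyckAux4
open DyckAux DyckAux2 DyckAux3
open scoped Classical
variable {M : ℕ}

lemma fAux_stable (hM : 0 < M) : ∀ n m : ℕ, ∀ k : Fin M → ℤ, (∀ j, 0 ≤ k j) →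
    (nu k).toNat ≤ n → (nu k).toNat ≤ m → fAux hM n k = fAux hM m k := by
  intro n
  induction n with
  | zero =>
    intro m k hk hn _
    have hk0 : k = 0 := by
      by_contra h
      have := nu_pos hk h
      omega
    subst hk0
    rw [fAux_zero, fAux_zero]
  | succ n ih =>
    intro m k hk hn hm
    by_cases h0 : k = 0
    · subst h0; rw [fAux_zero, fAux_zero]
    · have h1 : 1 ≤ nu k := nu_pos hk h0
      obtain ⟨m', rfl⟩ : ∃ m', m = m' + 1 := ⟨m - 1, by omega⟩
      rw [fAux_succ hM n hk h0, fAux_succ hM m' hk h0]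
      have hcong := parts_congr hM (f := fAux hM n) (g := fAux hM m') hk
        (fun q hq hlt => by
          have hq0 : 0 ≤ nu q := nu_nonneg hq
          exact ih m' q hq (by omega) (by omega))
        (fun q hq => fAux_neg hM n hq) (fun q hq => fAux_neg hM m' hq)
      rw [hcong]

/-- The solution. -/
noncomputable def fSol (hM : 0 < M) (k : Fin M → ℤ) : ℝ := fAux hM (nu k).toNat k

lemma fSol_zero (hM : 0 < M) : fSol hM (0 : Fin M → ℤ) = -4 := fAux_zero hM _

lemma fSol_neg (hM : 0 < M) {k : Fin M → ℤ} (h : ∃ j, k j < 0) : fSol hM k = 0 :=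
  fAux_neg hM _ h

lemma fSol_isSol (hM : 0 < M) : DyckRecursion hM (fSol hM) := by
  refine ⟨fSol_zero hM, fun k h => fSol_neg hM h, ?_⟩
  intro k hk h0
  have h1 : 1 ≤ nu k := nu_pos hk h0
  obtain ⟨t, ht⟩ : ∃ t, (nu k).toNat = t + 1 := ⟨(nu k).toNat - 1, by omega⟩
  have hfk : fSol hM k =
      (gammaExp (k - unitVec ⟨0, hM⟩) * fAux hM t (k - unitVec ⟨0, hM⟩) +
        Bsum hM (fAux hM t) k + Csum (fAux hM t) k) / 8 := by
    rw [fSol, ht, fAux_succ hM t hk h0]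
  have hcong := parts_congr hM (f := fAux hM t) (g := fSol hM) hk
    (fun q hq hlt => by
      have hq0 : 0 ≤ nu q := nu_nonneg hq
      exact fAux_stable hM t (nu q).toNat q hq (by omega) le_rfl)
    (fun q hq => fAux_neg hM t hq) (fun q hq => fSol_neg hM hq)
  rw [hcong] at hfk
  have hB : (∑ i : Fin M, if hi : (i : ℕ) + 1 < M then
      2 * ((i : ℕ) + 2 : ℝ) * ((k i : ℝ) + 1) *
        fSol hM (k - unitVec ⟨(i : ℕ) + 1, hi⟩ + unitVec i)
    else 0) = Bsum hM (fSol hM) k := rfl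
  rw [hB, convSplit (fSol_zero hM) hk h0]
  linarith

/-- Solved form of the recursion. -/
lemma solved_form {hM : 0 < M} {f : (Fin M → ℤ) → ℝ} (hf : DyckRecursion hM f)
    {k : Fin M → ℤ} (hk : ∀ j, 0 ≤ k j) (h0 : k ≠ 0) :
    8 * f k = gammaExp (k - unitVec ⟨0, hM⟩) * f (k - unitVec ⟨0, hM⟩) +
      Bsum hM f k + Csum f k := by
  have heq := hf.2.2 k hk h0
  have hB : (∑ i : Fin M, if hi : (i : ℕ) + 1 < M then
      2 * ((i : ℕ) + 2 : ℝ) * ((k i : ℝ) + 1) *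
        f (k - unitVec ⟨(i : ℕ) + 1, hi⟩ + unitVec i)
    else 0) = Bsum hM f k := rfl
  rw [hB, convSplit hf.1 hk h0] at heq
  linarith

/-- Uniqueness. -/
lemma sol_unique {hM : 0 < M} {f g : (Fin M → ℤ) → ℝ}
    (hf : DyckRecursion hM f) (hg : DyckRecursion hM g) : f = g := by
  have main : ∀ n : ℕ, ∀ k : Fin M → ℤ, (∀ j, 0 ≤ k j) → (nu k).toNat ≤ n → f k = g k := by
    intro n
    induction n with
    | zero =>
      intro k hk hn
      have hk0 : k = 0 := by
        by_contra h
        have := nu_pos hk h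
        omega
      subst hk0
      rw [hf.1, hg.1]
    | succ n ih =>
      intro k hk hn
      by_cases h0 : k = 0
      · subst h0; rw [hf.1, hg.1]
      · have h1 : 1 ≤ nu k := nu_pos hk h0
        have hsf := solved_form hf hk h0
        have hsg := solved_form hg hk h0
        have hcong := parts_congr hM (f := f) (g := g) hk
          (fun q hq hlt => by
            have hq0 : 0 ≤ nu q := nu_nonneg hq
            exact ih q hq (by omega))
          hf.2.1 hg.2.1
        rw [hcong] at hsf
        linarith
  funext k
  by_cases hk : ∀ j, 0 ≤ k j
  · exact main (nu k).toNat k hk le_rfl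
  · push_neg at hk
    obtain ⟨j, hj⟩ := hk
    rw [hf.2.1 k ⟨j, hj⟩, hg.2.1 k ⟨j, hj⟩]

end DyckAux4

namespace DyckAux5
open DyckAux DyckAux2 DyckAux3 DyckAux4
open scoped Classical
variable {M : ℕ}

lemma sol_pos {hM : 0 < M} {f : (Fin M → ℤ) → ℝ} (hf : DyckRecursion hM f) :
    ∀ n : ℕ, ∀ k : Fin M → ℤ, (∀ j, 0 ≤ k j) → k ≠ 0 → (nu k).toNat ≤ n → 0 < f k := by
  intro n
  induction n with
  | zero =>
    intro k hk h0 hn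
    have := nu_pos hk h0
    omega
  | succ n ih =>
    intro k hk h0 hn
    have h1 : 1 ≤ nu k := nu_pos hk h0
    have IH : ∀ q : Fin M → ℤ, (∀ j, 0 ≤ q j) → q ≠ 0 → nu q < nu k → 0 < f q := by
      intro q hq hq0 hlt
      have hq1 : 0 ≤ nu q := nu_nonneg hq
      exact ih q hq hq0 (by omega)
    have hsf := solved_form hf hk h0
    -- C ≥ 0
    have hC : 0 ≤ Csum f k := by
      refine Finset.sum_nonneg fun l hl => ?_
      obtain ⟨ha1, ha2, ha3, hb1, hb2, hb3⟩ := interior_facts hk hl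
      have p1 := IH _ ha1 ha2 ha3
      have p2 := IH _ hb1 hb2 hb3
      positivity
    -- each B term ≥ 0
    have hBterm : ∀ i : Fin M, 0 ≤ (if hi : (i : ℕ) + 1 < M then
        2 * ((i : ℕ) + 2 : ℝ) * ((k i : ℝ) + 1) *
          f (k - unitVec ⟨(i : ℕ) + 1, hi⟩ + unitVec i)
      else 0) := by
      intro i
      split
      · rename_i hi
        set m := k - unitVec ⟨(i : ℕ) + 1, hi⟩ + unitVec i with hm
        by_cases hmn : ∀ j, 0 ≤ m j
        · have hfm : 0 < f m := by
            refine IH m hmn (shift_ne_zero hk i hi) ?_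
            rw [hm, shift_nu]; omega
          have hki : (0:ℝ) ≤ (k i : ℝ) := by exact_mod_cast hk i
          have hic : (0:ℝ) ≤ ((i:ℕ) : ℝ) := Nat.cast_nonneg _
          positivity
        · push_neg at hmn
          obtain ⟨j, hj⟩ := hmn
          rw [hf.2.1 m ⟨j, by omega⟩, mul_zero]
      · exact le_rfl
    have hB : 0 ≤ Bsum hM f k := Finset.sum_nonneg fun i _ => hBterm i
    by_cases hk0 : 1 ≤ k ⟨0, hM⟩
    -- Case k₀ ≥ 1: the gamma term is positive.
    · have hsubn : ∀ j, 0 ≤ (k - unitVec ⟨0, hM⟩) j := by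
        intro j
        simp only [Pi.sub_apply, unitVec]
        split
        · rename_i hj; rw [hj]; omega
        · have := hk j; omega
      have hA : 0 < gammaExp (k - unitVec ⟨0, hM⟩) * f (k - unitVec ⟨0, hM⟩) := by
        by_cases hz : k - unitVec ⟨0, hM⟩ = 0
        · rw [hz, gammaExp_zero, hf.1]; norm_num
        · have hg1 : (1:ℝ) ≤ gammaExp (k - unitVec ⟨0, hM⟩) := gammaExp_ge_one hsubn hz
          have hfp : 0 < f (k - unitVec ⟨0, hM⟩) := by
            refine IH _ hsubn hz ?_
            rw [nu_sub_e0]; omega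
          nlinarith
      linarith
    -- Case k₀ = 0: some shift term is positive.
    · have hk00 : k ⟨0, hM⟩ = 0 := by have := hk ⟨0, hM⟩; omega
      have hA : f (k - unitVec ⟨0, hM⟩) = 0 := by
        refine hf.2.1 _ ⟨⟨0, hM⟩, ?_⟩
        simp [Pi.sub_apply, unitVec, hk00]
      -- find a coordinate j ≥ 1 with k j ≥ 1
      obtain ⟨j, hj⟩ : ∃ j, k j ≠ 0 := by
        by_contra h; push_neg at h; exact h0 (funext h)
      have hjv : 1 ≤ (j : ℕ) := by
        rcases Nat.eq_zero_or_pos (j : ℕ) with h | h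
        · exfalso; apply hj; have : j = ⟨0, hM⟩ := Fin.ext h; rw [this, hk00]
        · exact h
      set i : Fin M := ⟨(j : ℕ) - 1, by omega⟩ with hidef
      have hi : (i : ℕ) + 1 < M := by
        simp only [hidef]
        have := j.isLt
        omega
      have hjeq : (⟨(i : ℕ) + 1, hi⟩ : Fin M) = j := by
        apply Fin.ext
        simp only [hidef]
        omega
      have hkj1 : 1 ≤ k j := lt_of_le_of_ne (hk j) (Ne.symm hj)
      have hBpos : 0 < Bsum hM f k := by
        refine Finset.sum_pos' (fun i _ => hBterm i) ⟨i, Finset.mem_univ i, ?_⟩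
        rw [dif_pos hi]
        set m := k - unitVec ⟨(i : ℕ) + 1, hi⟩ + unitVec i with hm
        have hij : i ≠ (⟨(i : ℕ) + 1, hi⟩ : Fin M) := Fin.ne_of_val_ne (by simp)
        have hmn : ∀ j', 0 ≤ m j' := by
          intro j'
          simp only [hm, Pi.add_apply, Pi.sub_apply, unitVec, hjeq]
          have := hk j'
          split
          · rename_i h'; rw [h']; split <;> omega
          · split <;> omega
        have hfm : 0 < f m := by
          refine IH m hmn (shift_ne_zero hk i hi) ?_
          rw [hm, shift_nu]; omega
        have hki : (0:ℝ) ≤ (k i : ℝ) := by exact_mod_cast hk i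
        have hic : (0:ℝ) ≤ ((i:ℕ) : ℝ) := Nat.cast_nonneg _
        positivity
      rw [hA, mul_zero] at hsf
      linarith

end DyckAux5

theorem dyck_recursion_unique_and_positive (M : ℕ) (hM : 0 < M) :
    (∃! f : (Fin M → ℤ) → ℝ, DyckRecursion hM f) ∧
    (∀ f : (Fin M → ℤ) → ℝ, DyckRecursion hM f →
      ∀ k : Fin M → ℤ, (∀ j, 0 ≤ k j) → k ≠ 0 → 0 < f k) := by
  constructor
  · exact ⟨DyckAux4.fSol hM, DyckAux4.fSol_isSol hM,
      fun g hg => DyckAux4.sol_unique hg (DyckAux4.fSol_isSol hM)⟩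
  · intro f hf k hk h0
    exact DyckAux5.sol_pos hf (DyckAux.nu k).toNat k hk h0 le_rfl
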